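/- arXiv:2110.13615 — 2 statements merged into one kernel-verified Lean document; each statement's English description precedes it below -/
import Mathlib

section
/- The triangle T2 with vertices W1, W2, W3 is a solution of the Cramer–Castillon problem for the triangle ABC and its incircle: W1, W2 and W3 all lie on the incircle (dist(I,W1) = dist(I,W2) = dist(I,W3) = r), and the sides pass cyclically through the vertices of ABC, namely A lies on the line through W1 and W2, B lies on the line through W2 and W3, and C lies on the line through W3 and W1. -/
open EuclideanGeometry

/-- The point with barycentric coordinates `[x : y : z]` with respect to `(A, B, C)`. -/
noncomputable def bary (A B C : EuclideanSpace ℝ (Fin 2)) (x y z : ℝ) :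
    EuclideanSpace ℝ (Fin 2) :=
  (x + y + z)⁻¹ • (x • A + y • B + z • C)

private lemma dist_sq_two (x y : EuclideanSpace ℝ (Fin 2)) :
    dist x y ^ 2 = (x 0 - y 0) ^ 2 + (x 1 - y 1) ^ 2 := by
  rw [EuclideanSpace.dist_eq, Real.sq_sqrt (by positivity)]
  simp [Fin.sum_univ_two, Real.dist_eq, sq_abs]

private lemma bary_apply (A B C : EuclideanSpace ℝ (Fin 2)) (x y z : ℝ) (i : Fin 2) :
    bary A B C x y z i = (x + y + z)⁻¹ * (x * A i + y * B i + z * C i) := by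
  simp [bary, PiLp.smul_apply, PiLp.add_apply, smul_eq_mul]
  ring

private lemma le_of_sq_le_sq' {x y : ℝ} (_hx : 0 ≤ x) (hy : 0 ≤ y) (h : x ^ 2 ≤ y ^ 2) :
    x ≤ y := by nlinarith

private lemma sqrt_sq_dist_eq {x y z t : EuclideanSpace ℝ (Fin 2)}
    (h : dist x y ^ 2 = dist z t ^ 2) : dist x y = dist z t := by
  have h1 := Real.sqrt_sq (dist_nonneg (x := x) (y := y))
  have h2 := Real.sqrt_sq (dist_nonneg (x := z) (y := t))
  rw [← h1, ← h2, h]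

set_option maxHeartbeats 1600000 in
/-- The triangle `T2 = (W1, W2, W3)` is a solution of the Cramer–Castillon problem for the
triangle `ABC` and its incircle: its vertices lie on the incircle and its sides pass
cyclically through `A`, `B`, `C`. -/
theorem ccp_incircle_second_solution
    (A B C : EuclideanSpace ℝ (Fin 2)) (hABC : AffineIndependent ℝ ![A, B, C])
    (a b c s u v w φ : ℝ)
    (ha : a = dist B C) (hb : b = dist C A) (hc : c = dist A B)
    (hs : s = (a + b + c) / 2)
    (hu : u = s - a) (hv : v = s - b) (hw : w = s - c)
    (hφ : φ = (1 + Real.sqrt 5) / 2)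
    (I : EuclideanSpace ℝ (Fin 2)) (hI : I = bary A B C a b c)
    (r : ℝ) (hr : r = Metric.infDist I (affineSpan ℝ {B, C} : Set (EuclideanSpace ℝ (Fin 2))))
    (W1 W2 W3 : EuclideanSpace ℝ (Fin 2))
    (hW1 : W1 = bary A B C (1 / u) (φ ^ 2 / v) ((φ + 1) ^ 2 / w))
    (hW2 : W2 = bary A B C ((2 * φ + 1) ^ 2 / u) (φ ^ 2 / v) ((φ + 1) ^ 2 / w))
    (hW3 : W3 = bary A B C ((2 * φ + 1) ^ 2 / u) ((3 * φ + 2) ^ 2 / v) ((φ + 1) ^ 2 / w)) :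
    dist I W1 = r ∧ dist I W2 = r ∧ dist I W3 = r ∧
    A ∈ affineSpan ℝ ({W1, W2} : Set (EuclideanSpace ℝ (Fin 2))) ∧
    B ∈ affineSpan ℝ ({W2, W3} : Set (EuclideanSpace ℝ (Fin 2))) ∧
    C ∈ affineSpan ℝ ({W3, W1} : Set (EuclideanSpace ℝ (Fin 2))) := by
  -- nondegeneracy
  have hncol : ¬ Collinear ℝ ({A, B, C} : Set (EuclideanSpace ℝ (Fin 2))) :=
    affineIndependent_iff_not_collinear_set.mp hABC
  have hu0 : 0 < u := by
    have h1 : dist B C ≤ dist B A + dist A C := dist_triangle B A C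
    have h2 : dist B A + dist A C ≠ dist B C := by
      intro h
      exact hncol ((dist_add_dist_eq_iff.mp h).collinear.subset
        (by intro x hx; simp at hx ⊢; tauto))
    have h3 : dist B C < dist B A + dist A C := lt_of_le_of_ne h1 (Ne.symm h2)
    have e1 : dist C A = dist A C := dist_comm C A
    have e2 : dist A B = dist B A := dist_comm A B
    rw [hu, hs, ha, hb, hc]; linarith
  have hv0 : 0 < v := by
    have h1 : dist C A ≤ dist C B + dist B A := dist_triangle C B A
    have h2 : dist C B + dist B A ≠ dist C A := by
      intro h
      exact hncol ((dist_add_dist_eq_iff.mp h).collinear.subset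
        (by intro x hx; simp at hx ⊢; tauto))
    have h3 : dist C A < dist C B + dist B A := lt_of_le_of_ne h1 (Ne.symm h2)
    have e1 : dist B C = dist C B := dist_comm B C
    have e2 : dist A B = dist B A := dist_comm A B
    rw [hv, hs, ha, hb, hc]; linarith
  have hw0 : 0 < w := by
    have h1 : dist A B ≤ dist A C + dist C B := dist_triangle A C B
    have h2 : dist A C + dist C B ≠ dist A B := by
      intro h
      exact hncol ((dist_add_dist_eq_iff.mp h).collinear.subset
        (by intro x hx; simp at hx ⊢; tauto))
    have h3 : dist A B < dist A C + dist C B := lt_of_le_of_ne h1 (Ne.symm h2)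
    have e1 : dist B C = dist C B := dist_comm B C
    have e2 : dist C A = dist A C := dist_comm C A
    rw [hw, hs, ha, hb, hc]; linarith
  have hS0 : 0 < u + v + w := by linarith
  have ha' : a = v + w := by rw [hv, hw, hs]; ring
  have hb' : b = u + w := by rw [hu, hw, hs]; ring
  have hc' : c = u + v := by rw [hu, hv, hs]; ring
  have hφ0 : 0 < φ := by rw [hφ]; positivity
  have hq1 : (0:ℝ) < 4 * φ ^ 2 + 4 * φ := by rw [hφ]; positivity
  have hq2 : (0:ℝ) < 8 * φ ^ 2 + 12 * φ + 4 := by rw [hφ]; positivity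
  have hφ2 : φ ^ 2 = φ + 1 := by
    have h5 : Real.sqrt 5 ^ 2 = 5 := Real.sq_sqrt (by norm_num)
    rw [hφ]; linear_combination h5 / 4
  -- coordinate constraints
  have nc : (B 0 - A 0) ^ 2 + (B 1 - A 1) ^ 2 = (u + v) ^ 2 := by
    have h : dist A B ^ 2 = (u + v) ^ 2 := by rw [← hc, hc']
    rw [dist_sq_two] at h; linear_combination h
  have nb : (C 0 - A 0) ^ 2 + (C 1 - A 1) ^ 2 = (u + w) ^ 2 := by
    have h : dist C A ^ 2 = (u + w) ^ 2 := by rw [← hb, hb']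
    rw [dist_sq_two] at h; linear_combination h
  have na : (B 0 - C 0) ^ 2 + (B 1 - C 1) ^ 2 = (v + w) ^ 2 := by
    have h : dist B C ^ 2 = (v + w) ^ 2 := by rw [← ha, ha']
    rw [dist_sq_two] at h; linear_combination h
  have hip : (B 0 - A 0) * (C 0 - A 0) + (B 1 - A 1) * (C 1 - A 1)
      = u ^ 2 + u * v + u * w - v * w := by
    linear_combination (nc + nb - na) / 2
  have hexp : ∀ g1 g2 : ℝ,
      (g1 * (B 0 - A 0) + g2 * (C 0 - A 0)) ^ 2 + (g1 * (B 1 - A 1) + g2 * (C 1 - A 1)) ^ 2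
      = g1 ^ 2 * (u + v) ^ 2 + 2 * g1 * g2 * (u ^ 2 + u * v + u * w - v * w)
        + g2 ^ 2 * (u + w) ^ 2 := by
    intro g1 g2
    linear_combination g1 ^ 2 * nc + 2 * g1 * g2 * hip + g2 ^ 2 * nb
  -- nonzero denominators
  have hune : u ≠ 0 := ne_of_gt hu0
  have hvne : v ≠ 0 := ne_of_gt hv0
  have hwne : w ≠ 0 := ne_of_gt hw0
  have hSne : u + v + w ≠ 0 := ne_of_gt hS0
  have hφ1 : (0:ℝ) < (φ + 1) ^ 2 := by positivity
  have hφ21 : (0:ℝ) < (2 * φ + 1) ^ 2 := by positivity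
  have hφ32 : (0:ℝ) < (3 * φ + 2) ^ 2 := by positivity
  have hM1 : 0 < v * w + φ ^ 2 * (u * w) + (φ + 1) ^ 2 * (u * v) := by
    have h1 := mul_pos hv0 hw0
    have h2 : 0 ≤ φ ^ 2 * (u * w) := mul_nonneg (sq_nonneg φ) (mul_pos hu0 hw0).le
    have h3 : 0 ≤ (φ + 1) ^ 2 * (u * v) := mul_nonneg hφ1.le (mul_pos hu0 hv0).le
    linarith
  have hM2 : 0 < (2 * φ + 1) ^ 2 * (v * w) + φ ^ 2 * (u * w) + (φ + 1) ^ 2 * (u * v) := by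
    have h1 := mul_pos hφ21 (mul_pos hv0 hw0)
    have h2 : 0 ≤ φ ^ 2 * (u * w) := mul_nonneg (sq_nonneg φ) (mul_pos hu0 hw0).le
    have h3 : 0 ≤ (φ + 1) ^ 2 * (u * v) := mul_nonneg hφ1.le (mul_pos hu0 hv0).le
    linarith
  have hM3 : 0 < (2 * φ + 1) ^ 2 * (v * w) + (3 * φ + 2) ^ 2 * (u * w)
      + (φ + 1) ^ 2 * (u * v) := by
    have h1 := mul_pos hφ21 (mul_pos hv0 hw0)
    have h2 := mul_pos hφ32 (mul_pos hu0 hw0)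
    have h3 : 0 ≤ (φ + 1) ^ 2 * (u * v) := mul_nonneg hφ1.le (mul_pos hu0 hv0).le
    linarith
  have hM1ne := ne_of_gt hM1
  have hM2ne := ne_of_gt hM2
  have hM3ne := ne_of_gt hM3
  have h2S : (0:ℝ) < 2 * (u + v + w) := by linarith
  have h2Sne : (2 * (u + v + w)) ≠ 0 := ne_of_gt h2S
  have hvwne : (v + w) ≠ 0 := ne_of_gt (add_pos hv0 hw0)
  have hN1 : 1 / u + φ ^ 2 / v + (φ + 1) ^ 2 / w ≠ 0 := by
    have h1 : 0 < 1 / u := by positivity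
    have h2 : 0 ≤ φ ^ 2 / v := div_nonneg (sq_nonneg φ) hv0.le
    have h3 : 0 ≤ (φ + 1) ^ 2 / w := div_nonneg hφ1.le hw0.le
    positivity
  have hN2 : (2 * φ + 1) ^ 2 / u + φ ^ 2 / v + (φ + 1) ^ 2 / w ≠ 0 := by
    have h1 : 0 < (2 * φ + 1) ^ 2 / u := div_pos hφ21 hu0
    have h2 : 0 ≤ φ ^ 2 / v := div_nonneg (sq_nonneg φ) hv0.le
    have h3 : 0 ≤ (φ + 1) ^ 2 / w := div_nonneg hφ1.le hw0.le
    linarith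
  have hN3 : (2 * φ + 1) ^ 2 / u + (3 * φ + 2) ^ 2 / v + (φ + 1) ^ 2 / w ≠ 0 := by
    have h1 : 0 < (2 * φ + 1) ^ 2 / u := div_pos hφ21 hu0
    have h2 : 0 ≤ (3 * φ + 2) ^ 2 / v := div_nonneg hφ32.le hv0.le
    have h3 : 0 ≤ (φ + 1) ^ 2 / w := div_nonneg hφ1.le hw0.le
    linarith
  -- coordinates of the relevant points
  have hIi : ∀ i : Fin 2, I i
      = (A i * (v + w) + B i * (u + w) + C i * (u + v)) / (2 * (u + v + w)) := by
    intro i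
    rw [hI, ha', hb', hc', bary_apply]
    rw [show (v + w) + (u + w) + (u + v) = 2 * (u + v + w) by ring]
    rw [inv_mul_eq_div, div_eq_div_iff h2Sne h2Sne]
    ring
  have hW1i : ∀ i : Fin 2, W1 i
      = (A i * (v * w) + B i * (φ ^ 2 * (u * w)) + C i * ((φ + 1) ^ 2 * (u * v)))
        / (v * w + φ ^ 2 * (u * w) + (φ + 1) ^ 2 * (u * v)) := by
    intro i
    rw [hW1, bary_apply, inv_mul_eq_div, div_eq_div_iff hN1 hM1ne]
    field_simp
  have hW2i : ∀ i : Fin 2, W2 i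
      = (A i * ((2 * φ + 1) ^ 2 * (v * w)) + B i * (φ ^ 2 * (u * w))
          + C i * ((φ + 1) ^ 2 * (u * v)))
        / ((2 * φ + 1) ^ 2 * (v * w) + φ ^ 2 * (u * w) + (φ + 1) ^ 2 * (u * v)) := by
    intro i
    rw [hW2, bary_apply, inv_mul_eq_div, div_eq_div_iff hN2 hM2ne]
    field_simp
  have hW3i : ∀ i : Fin 2, W3 i
      = (A i * ((2 * φ + 1) ^ 2 * (v * w)) + B i * ((3 * φ + 2) ^ 2 * (u * w))
          + C i * ((φ + 1) ^ 2 * (u * v)))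
        / ((2 * φ + 1) ^ 2 * (v * w) + (3 * φ + 2) ^ 2 * (u * w) + (φ + 1) ^ 2 * (u * v)) := by
    intro i
    rw [hW3, bary_apply, inv_mul_eq_div, div_eq_div_iff hN3 hM3ne]
    field_simp
  -- squared distances from the incenter
  have hdW1 : dist I W1 ^ 2 = u * v * w / (u + v + w) := by
    have hd : ∀ i : Fin 2, I i - W1 i =
        (((u + w) * (v * w + φ ^ 2 * (u * w) + (φ + 1) ^ 2 * (u * v))
            - 2 * (u + v + w) * (φ ^ 2 * (u * w))) * (B i - A i)
          + ((u + v) * (v * w + φ ^ 2 * (u * w) + (φ + 1) ^ 2 * (u * v))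
            - 2 * (u + v + w) * ((φ + 1) ^ 2 * (u * v))) * (C i - A i))
        / (2 * (u + v + w) * (v * w + φ ^ 2 * (u * w) + (φ + 1) ^ 2 * (u * v))) := by
      intro i
      rw [hIi i, hW1i i, div_sub_div _ _ h2Sne hM1ne,
        div_eq_div_iff (mul_ne_zero h2Sne hM1ne) (mul_ne_zero h2Sne hM1ne)]
      ring
    rw [dist_sq_two, hd 0, hd 1, div_pow, div_pow, ← add_div, hexp,
      div_eq_div_iff (pow_ne_zero 2 (mul_ne_zero h2Sne hM1ne)) hSne]
    ring
  have hdW2 : dist I W2 ^ 2 = u * v * w / (u + v + w) := by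
    have hd : ∀ i : Fin 2, I i - W2 i =
        (((u + w) * ((2 * φ + 1) ^ 2 * (v * w) + φ ^ 2 * (u * w) + (φ + 1) ^ 2 * (u * v))
            - 2 * (u + v + w) * (φ ^ 2 * (u * w))) * (B i - A i)
          + ((u + v) * ((2 * φ + 1) ^ 2 * (v * w) + φ ^ 2 * (u * w) + (φ + 1) ^ 2 * (u * v))
            - 2 * (u + v + w) * ((φ + 1) ^ 2 * (u * v))) * (C i - A i))
        / (2 * (u + v + w)
            * ((2 * φ + 1) ^ 2 * (v * w) + φ ^ 2 * (u * w) + (φ + 1) ^ 2 * (u * v))) := by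
      intro i
      rw [hIi i, hW2i i, div_sub_div _ _ h2Sne hM2ne,
        div_eq_div_iff (mul_ne_zero h2Sne hM2ne) (mul_ne_zero h2Sne hM2ne)]
      ring
    rw [dist_sq_two, hd 0, hd 1, div_pow, div_pow, ← add_div, hexp,
      div_eq_div_iff (pow_ne_zero 2 (mul_ne_zero h2Sne hM2ne)) hSne]
    ring
  have hdW3 : dist I W3 ^ 2 = u * v * w / (u + v + w) := by
    have hd : ∀ i : Fin 2, I i - W3 i =
        (((u + w) * ((2 * φ + 1) ^ 2 * (v * w) + (3 * φ + 2) ^ 2 * (u * w)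
              + (φ + 1) ^ 2 * (u * v))
            - 2 * (u + v + w) * ((3 * φ + 2) ^ 2 * (u * w))) * (B i - A i)
          + ((u + v) * ((2 * φ + 1) ^ 2 * (v * w) + (3 * φ + 2) ^ 2 * (u * w)
              + (φ + 1) ^ 2 * (u * v))
            - 2 * (u + v + w) * ((φ + 1) ^ 2 * (u * v))) * (C i - A i))
        / (2 * (u + v + w)
            * ((2 * φ + 1) ^ 2 * (v * w) + (3 * φ + 2) ^ 2 * (u * w)
              + (φ + 1) ^ 2 * (u * v))) := by
      intro i
      rw [hIi i, hW3i i, div_sub_div _ _ h2Sne hM3ne,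
        div_eq_div_iff (mul_ne_zero h2Sne hM3ne) (mul_ne_zero h2Sne hM3ne)]
      ring
    rw [dist_sq_two, hd 0, hd 1, div_pow, div_pow, ← add_div, hexp,
      div_eq_div_iff (pow_ne_zero 2 (mul_ne_zero h2Sne hM3ne)) hSne]
    ring
  -- the foot of the perpendicular from I to line BC
  set X : EuclideanSpace ℝ (Fin 2) := AffineMap.lineMap B C (v / (v + w)) with hX
  have hXmem : X ∈ affineSpan ℝ ({B, C} : Set (EuclideanSpace ℝ (Fin 2))) :=
    AffineMap.lineMap_mem_affineSpan_pair _ _ _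
  have hXi : ∀ i : Fin 2, X i = B i + (v / (v + w)) * (C i - B i) := by
    intro i
    rw [hX]
    simp [AffineMap.lineMap_apply, PiLp.add_apply, PiLp.smul_apply, PiLp.sub_apply,
      smul_eq_mul, vsub_eq_sub, vadd_eq_add]
    ring
  have hvw0 : (0:ℝ) < v + w := by linarith
  have hdX : dist I X ^ 2 = u * v * w / (u + v + w) := by
    have hd : ∀ i : Fin 2, I i - X i =
        (((u + w) * (v + w) - 2 * (u + v + w) * w) * (B i - A i)
          + ((u + v) * (v + w) - 2 * (u + v + w) * v) * (C i - A i))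
        / (2 * (u + v + w) * (v + w)) := by
      intro i
      rw [hIi i, hXi i]
      field_simp
      ring
    rw [dist_sq_two, hd 0, hd 1, div_pow, div_pow, ← add_div, hexp,
      div_eq_div_iff (pow_ne_zero 2 (mul_ne_zero h2Sne hvwne)) hSne]
    ring
  -- r equals dist I X
  have hrX : r = dist I X := by
    have hub : Metric.infDist I (affineSpan ℝ ({B, C} : Set (EuclideanSpace ℝ (Fin 2))))
        ≤ dist I X := Metric.infDist_le_dist_of_mem hXmem
    have hlb : ∀ p ∈ (affineSpan ℝ ({B, C} : Set (EuclideanSpace ℝ (Fin 2))) :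
        Set (EuclideanSpace ℝ (Fin 2))), dist I X ≤ dist I p := by
      intro p hp
      rw [show p = (p -ᵥ B) +ᵥ B from (vsub_vadd p B).symm] at hp
      obtain ⟨t, ht⟩ := vadd_left_mem_affineSpan_pair.mp hp
      have hpi : ∀ i : Fin 2, p i = B i + t * (C i - B i) := by
        intro i
        have h := congrArg (fun x => x i) ht
        simp only [vsub_eq_sub, PiLp.smul_apply, PiLp.sub_apply, smul_eq_mul] at h
        linear_combination -h
      have hdp : dist I p ^ 2 = u * v * w / (u + v + w) + ((v + w) * t - v) ^ 2 := by
        have hd : ∀ i : Fin 2, I i - p i =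
            ((((u + w) - 2 * (u + v + w) + 2 * (u + v + w) * t)) * (B i - A i)
              + (((u + v) - 2 * (u + v + w) * t)) * (C i - A i))
            / (2 * (u + v + w)) := by
          intro i
          rw [hIi i, hpi i]
          field_simp
          ring
        rw [dist_sq_two, hd 0, hd 1, div_pow, div_pow, ← add_div, hexp]
        field_simp
        ring
      have h1 : dist I X ^ 2 ≤ dist I p ^ 2 := by
        rw [hdX, hdp]; linarith [sq_nonneg ((v + w) * t - v)]
      exact le_of_sq_le_sq' dist_nonneg dist_nonneg h1
    rw [hr]
    refine le_antisymm hub ?_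
    by_contra hlt
    push_neg at hlt
    obtain ⟨y, hy, hdy⟩ := (Metric.infDist_lt_iff
      ⟨B, left_mem_affineSpan_pair ℝ B C⟩).mp hlt
    exact absurd hdy (not_lt.mpr (hlb y hy))
  -- three vertices on the incircle
  refine ⟨?_, ?_, ?_, ?_, ?_, ?_⟩
  · rw [hrX]; exact sqrt_sq_dist_eq (by rw [hdW1, hdX])
  · rw [hrX]; exact sqrt_sq_dist_eq (by rw [hdW2, hdX])
  · rw [hrX]; exact sqrt_sq_dist_eq (by rw [hdW3, hdX])
  -- A on line W1 W2
  · have hA : AffineMap.lineMap W1 W2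
        (((2 * φ + 1) ^ 2 * (v * w) + φ ^ 2 * (u * w) + (φ + 1) ^ 2 * (u * v))
          / ((4 * φ ^ 2 + 4 * φ) * (v * w))) = A := by
      have hd0 : ((4 * φ ^ 2 + 4 * φ) * (v * w)) ≠ 0 :=
        ne_of_gt (mul_pos hq1 (mul_pos hv0 hw0))
      ext i
      show _ = A i
      simp only [AffineMap.lineMap_apply, PiLp.add_apply, PiLp.smul_apply, PiLp.sub_apply,
        smul_eq_mul, vsub_eq_sub, vadd_eq_add]
      rw [hW1i i, hW2i i]
      field_simp
      ring
    rw [← hA]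
    exact AffineMap.lineMap_mem_affineSpan_pair _ _ _
  -- B on line W2 W3
  · have hB : AffineMap.lineMap W2 W3
        (((2 * φ + 1) ^ 2 * (v * w) + (3 * φ + 2) ^ 2 * (u * w) + (φ + 1) ^ 2 * (u * v))
          / ((8 * φ ^ 2 + 12 * φ + 4) * (u * w))) = B := by
      have hd0 : ((8 * φ ^ 2 + 12 * φ + 4) * (u * w)) ≠ 0 :=
        ne_of_gt (mul_pos hq2 (mul_pos hu0 hw0))
      ext i
      show _ = B i
      simp only [AffineMap.lineMap_apply, PiLp.add_apply, PiLp.smul_apply, PiLp.sub_apply,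
        smul_eq_mul, vsub_eq_sub, vadd_eq_add]
      rw [hW2i i, hW3i i]
      field_simp
      ring
    rw [← hB]
    exact AffineMap.lineMap_mem_affineSpan_pair _ _ _
  -- C on line W3 W1
  · have hC : AffineMap.lineMap W3 W1
        (((2 * φ + 1) ^ 2 * (v * w + φ ^ 2 * (u * w) + (φ + 1) ^ 2 * (u * v)))
          / ((4 * φ ^ 2 + 4 * φ) * ((φ + 1) ^ 2 * (u * v)))) = C := by
      have hd0 : ((4 * φ ^ 2 + 4 * φ) * ((φ + 1) ^ 2 * (u * v))) ≠ 0 :=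
        ne_of_gt (mul_pos hq1 (mul_pos hφ1 (mul_pos hu0 hv0)))
      ext i
      show _ = C i
      simp only [AffineMap.lineMap_apply, PiLp.add_apply, PiLp.smul_apply, PiLp.sub_apply,
        smul_eq_mul, vsub_eq_sub, vadd_eq_add]
      rw [hW3i i, hW1i i]
      field_simp
      have e3 : φ ^ 3 = 2 * φ + 1 := by linear_combination φ * hφ2 + 1 * hφ2
      have e4 : φ ^ 4 = 3 * φ + 2 := by linear_combination φ * e3 + 2 * hφ2
      have e5 : φ ^ 5 = 5 * φ + 3 := by linear_combination φ * e4 + 3 * hφ2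
      have e6 : φ ^ 6 = 8 * φ + 5 := by linear_combination φ * e5 + 5 * hφ2
      have e7 : φ ^ 7 = 13 * φ + 8 := by linear_combination φ * e6 + 8 * hφ2
      have e8 : φ ^ 8 = 21 * φ + 13 := by linear_combination φ * e7 + 13 * hφ2
      have e9 : φ ^ 9 = 34 * φ + 21 := by linear_combination φ * e8 + 21 * hφ2
      have e10 : φ ^ 10 = 55 * φ + 34 := by linear_combination φ * e9 + 34 * hφ2
      have e11 : φ ^ 11 = 89 * φ + 55 := by linear_combination φ * e10 + 55 * hφ2
      have e12 : φ ^ 12 = 144 * φ + 89 := by linear_combination φ * e11 + 89 * hφ2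
      have e13 : φ ^ 13 = 233 * φ + 144 := by linear_combination φ * e12 + 144 * hφ2
      have e14 : φ ^ 14 = 377 * φ + 233 := by linear_combination φ * e13 + 233 * hφ2
      have e15 : φ ^ 15 = 610 * φ + 377 := by linear_combination φ * e14 + 377 * hφ2
      have e16 : φ ^ 16 = 987 * φ + 610 := by linear_combination φ * e15 + 610 * hφ2
      have e17 : φ ^ 17 = 1597 * φ + 987 := by linear_combination φ * e16 + 987 * hφ2
      have e18 : φ ^ 18 = 2584 * φ + 1597 := by linear_combination φ * e17 + 1597 * hφ2
      have e19 : φ ^ 19 = 4181 * φ + 2584 := by linear_combination φ * e18 + 2584 * hφ2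
      have e20 : φ ^ 20 = 6765 * φ + 4181 := by linear_combination φ * e19 + 4181 * hφ2
      ring_nf
      simp only [hφ2, e3, e4, e5, e6, e7, e8, e9, e10, e11, e12, e13, e14, e15, e16, e17, e18, e19, e20]
      ring_nf
    rw [← hC]
    exact AffineMap.lineMap_mem_affineSpan_pair _ _ _
end

section
/- The two CCP solution triangles share their circumcenter, which is the incenter of the reference triangle: the vertices V1, V2, V3 of T1 and W1, W2, W3 of T2 are all equidistant from I = [a:b:c], the incenter of ABC; in particular, if V1, V2, V3 are affinely independent, the circumcenter of the triangle (V1,V2,V3) equals I, and likewise for (W1,W2,W3). -/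
set_option maxHeartbeats 4000000

open EuclideanGeometry

lemma bary_smul (A B C : EuclideanSpace ℝ (Fin 2)) (k x y z : ℝ) (hk : k ≠ 0) :
    bary A B C x y z = bary A B C (k * x) (k * y) (k * z) := by
  unfold bary
  have h1 : (k * x) • A + (k * y) • B + (k * z) • C = k • (x • A + y • B + z • C) := by
    module
  rw [h1, show k * x + k * y + k * z = k * (x + y + z) by ring, mul_inv, mul_comm k⁻¹,
    mul_smul, inv_smul_smul₀ hk]

lemma bary_dist_sq (A B C : EuclideanSpace ℝ (Fin 2)) (α β γ x y z : ℝ)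
    (hτ : α + β + γ ≠ 0) (hσ : x + y + z ≠ 0) :
    dist (bary A B C α β γ) (bary A B C x y z) ^ 2 =
      ((α * (x + y + z) - x * (α + β + γ)) ^ 2 * dist C A ^ 2
        + (β * (x + y + z) - y * (α + β + γ)) ^ 2 * dist B C ^ 2
        + (α * (x + y + z) - x * (α + β + γ)) * (β * (x + y + z) - y * (α + β + γ))
            * (dist B C ^ 2 + dist C A ^ 2 - dist A B ^ 2))
        / ((α + β + γ) * (x + y + z)) ^ 2 := by
  set p := α * (x + y + z) - x * (α + β + γ) with hp
  set q := β * (x + y + z) - y * (α + β + γ) with hq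
  have hd : bary A B C α β γ - bary A B C x y z =
      ((α + β + γ) * (x + y + z))⁻¹ • (p • (A - C) + q • (B - C)) := by
    unfold bary
    match_scalars
    · field_simp; ring
    · field_simp; ring
    · field_simp; ring
  have hin : (inner ℝ (A - C) (B - C) : ℝ) =
      (dist B C ^ 2 + dist C A ^ 2 - dist A B ^ 2) / 2 := by
    simp only [dist_eq_norm, ← real_inner_self_eq_norm_sq]
    simp only [inner_sub_left, inner_sub_right, real_inner_comm B A, real_inner_comm C A,
      real_inner_comm C B]
    ring
  have hD : ‖p • (A - C) + q • (B - C)‖ ^ 2 =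
      p ^ 2 * dist C A ^ 2 + q ^ 2 * dist B C ^ 2
        + p * q * (dist B C ^ 2 + dist C A ^ 2 - dist A B ^ 2) := by
    rw [norm_add_sq_real, real_inner_smul_left, real_inner_smul_right, hin,
      norm_smul, norm_smul, mul_pow, mul_pow, dist_eq_norm, dist_eq_norm, dist_eq_norm,
      show ‖A - C‖ = ‖C - A‖ from norm_sub_rev A C, show ‖q‖ ^ 2 = q ^ 2 from sq_abs q,
      show ‖p‖ ^ 2 = p ^ 2 from sq_abs p]
    ring
  rw [dist_eq_norm, hd, norm_smul, mul_pow, hD, show ‖((α + β + γ) * (x + y + z))⁻¹‖ ^ 2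
      = (((α + β + γ) * (x + y + z))⁻¹) ^ 2 from sq_abs _]
  field_simp

lemma dist_eq_of_sq_eq {P Q R : EuclideanSpace ℝ (Fin 2)}
    (h : dist P Q ^ 2 = dist P R ^ 2) : dist P Q = dist P R := by
  rw [← Real.sqrt_sq dist_nonneg, h, Real.sqrt_sq dist_nonneg]

/-- The two CCP solution triangles share their circumcenter, which is the incenter `I`
of the reference triangle: all six vertices `V1, V2, V3, W1, W2, W3` are equidistant
from `I`, and whenever the vertex triples are affinely independent their circumcenters
equal `I`. -/
theorem ccp_solutions_share_circumcenter_incenter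
    (A B C : EuclideanSpace ℝ (Fin 2)) (hABC : AffineIndependent ℝ ![A, B, C])
    (a b c s u v w φ : ℝ)
    (ha : a = dist B C) (hb : b = dist C A) (hc : c = dist A B)
    (hs : s = (a + b + c) / 2)
    (hu : u = s - a) (hv : v = s - b) (hw : w = s - c)
    (hφ : φ = (1 + Real.sqrt 5) / 2)
    (I : EuclideanSpace ℝ (Fin 2)) (hI : I = bary A B C a b c)
    (V1 V2 V3 : EuclideanSpace ℝ (Fin 2))
    (hV1 : V1 = bary A B C (φ ^ 2 / u) (1 / v) ((φ - 1) ^ 2 / w))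
    (hV2 : V2 = bary A B C ((φ - 2) ^ 2 / u) (1 / v) ((φ - 1) ^ 2 / w))
    (hV3 : V3 = bary A B C ((φ - 2) ^ 2 / u) ((2 * φ - 3) ^ 2 / v) ((φ - 1) ^ 2 / w))
    (W1 W2 W3 : EuclideanSpace ℝ (Fin 2))
    (hW1 : W1 = bary A B C (1 / u) (φ ^ 2 / v) ((φ + 1) ^ 2 / w))
    (hW2 : W2 = bary A B C ((2 * φ + 1) ^ 2 / u) (φ ^ 2 / v) ((φ + 1) ^ 2 / w))
    (hW3 : W3 = bary A B C ((2 * φ + 1) ^ 2 / u) ((3 * φ + 2) ^ 2 / v) ((φ + 1) ^ 2 / w)) :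
    (dist I V1 = dist I V2 ∧ dist I V2 = dist I V3 ∧ dist I V3 = dist I W1 ∧
      dist I W1 = dist I W2 ∧ dist I W2 = dist I W3) ∧
    (∀ hV : AffineIndependent ℝ ![V1, V2, V3],
      (⟨![V1, V2, V3], hV⟩ : Affine.Triangle ℝ (EuclideanSpace ℝ (Fin 2))).circumcenter = I) ∧
    (∀ hW : AffineIndependent ℝ ![W1, W2, W3],
      (⟨![W1, W2, W3], hW⟩ : Affine.Triangle ℝ (EuclideanSpace ℝ (Fin 2))).circumcenter = I) := by
  -- distinctness and positivity of side lengths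
  have hAB : A ≠ B := by simpa using hABC.injective.ne (show (0 : Fin 3) ≠ 1 by decide)
  have hBC : B ≠ C := by simpa using hABC.injective.ne (show (1 : Fin 3) ≠ 2 by decide)
  have hCA : C ≠ A := by
    have := hABC.injective.ne (show (2 : Fin 3) ≠ 0 by decide); simpa using this
  have ha0 : 0 < a := ha ▸ dist_pos.mpr hBC
  have hb0 : 0 < b := hb ▸ dist_pos.mpr hCA
  have hc0 : 0 < c := hc ▸ dist_pos.mpr hAB
  have hncol : ¬ Collinear ℝ ({A, B, C} : Set (EuclideanSpace ℝ (Fin 2))) :=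
    affineIndependent_iff_not_collinear_set.mp hABC
  -- strict triangle inequalities
  have htri1 : a < b + c := by
    by_contra hcon
    push_neg at hcon
    have h1 : dist B A + dist A C = c + b := by rw [dist_comm B A, dist_comm A C, ← hc, ← hb]
    have h2 : dist B C ≤ dist B A + dist A C := dist_triangle B A C
    have heq : dist B A + dist A C = dist B C := by
      rw [h1, ← ha]
      have : dist B C ≤ c + b := by rw [← h1]; exact h2
      rw [← ha] at this
      linarith
    have hwb : Wbtw ℝ B A C := dist_add_dist_eq_iff.mp heq
    exact hncol (hwb.collinear.subset (by intro x hx; simp at hx ⊢; tauto))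
  have htri2 : b < a + c := by
    by_contra hcon
    push_neg at hcon
    have h1 : dist C B + dist B A = a + c := by rw [dist_comm C B, dist_comm B A, ← ha, ← hc]
    have h2 : dist C A ≤ dist C B + dist B A := dist_triangle C B A
    have heq : dist C B + dist B A = dist C A := by
      rw [h1, ← hb]
      have : dist C A ≤ a + c := by rw [← h1]; exact h2
      rw [← hb] at this
      linarith
    have hwb : Wbtw ℝ C B A := dist_add_dist_eq_iff.mp heq
    exact hncol (hwb.collinear.subset (by intro x hx; simp at hx ⊢; tauto))
  have htri3 : c < a + b := by
    by_contra hcon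
    push_neg at hcon
    have h1 : dist A C + dist C B = b + a := by rw [dist_comm A C, dist_comm C B, ← hb, ← ha]
    have h2 : dist A B ≤ dist A C + dist C B := dist_triangle A C B
    have heq : dist A C + dist C B = dist A B := by
      rw [h1, ← hc]
      have : dist A B ≤ b + a := by rw [← h1]; exact h2
      rw [← hc] at this
      linarith
    have hwb : Wbtw ℝ A C B := dist_add_dist_eq_iff.mp heq
    exact hncol (hwb.collinear.subset (by intro x hx; simp at hx ⊢; tauto))
  have hu0 : 0 < u := by rw [hu, hs]; linarith
  have hv0 : 0 < v := by rw [hv, hs]; linarith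
  have hw0 : 0 < w := by rw [hw, hs]; linarith
  have hu' : u ≠ 0 := ne_of_gt hu0
  have hv' : v ≠ 0 := ne_of_gt hv0
  have hw' : w ≠ 0 := ne_of_gt hw0
  have hk : u * v * w ≠ 0 := mul_ne_zero (mul_ne_zero hu' hv') hw'
  -- facts about φ
  have h5 : Real.sqrt 5 ^ 2 = 5 := Real.sq_sqrt (by norm_num)
  have h5n : 0 ≤ Real.sqrt 5 := Real.sqrt_nonneg 5
  have h5a : 2 < Real.sqrt 5 := by nlinarith
  have h5b : Real.sqrt 5 < 3 := by nlinarith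
  have hφa : 3 / 2 < φ := by rw [hφ]; linarith
  have hφb : φ < 2 := by rw [hφ]; linarith
  have k1 : 0 < φ ^ 2 := pow_pos (by linarith) 2
  have k2 : 0 < (φ - 1) ^ 2 := pow_pos (by linarith) 2
  have k3 : 0 < (φ - 2) ^ 2 := by
    rw [show (φ - 2) ^ 2 = (2 - φ) ^ 2 by ring]; exact pow_pos (by linarith) 2
  have k4 : 0 < (2 * φ - 3) ^ 2 := pow_pos (by linarith) 2
  have k5 : 0 < (φ + 1) ^ 2 := pow_pos (by linarith) 2
  have k6 : 0 < (2 * φ + 1) ^ 2 := pow_pos (by linarith) 2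
  have k7 : 0 < (3 * φ + 2) ^ 2 := pow_pos (by linarith) 2
  -- rescaled barycentric coordinates (multiplied by u*v*w)
  have hV1' : V1 = bary A B C (φ ^ 2 * (v * w)) (u * w) ((φ - 1) ^ 2 * (u * v)) := by
    rw [hV1, bary_smul A B C (u * v * w) _ _ _ hk,
      show u * v * w * (φ ^ 2 / u) = φ ^ 2 * (v * w) by field_simp,
      show u * v * w * (1 / v) = u * w by field_simp,
      show u * v * w * ((φ - 1) ^ 2 / w) = (φ - 1) ^ 2 * (u * v) by field_simp]
  have hV2' : V2 = bary A B C ((φ - 2) ^ 2 * (v * w)) (u * w) ((φ - 1) ^ 2 * (u * v)) := by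
    rw [hV2, bary_smul A B C (u * v * w) _ _ _ hk,
      show u * v * w * ((φ - 2) ^ 2 / u) = (φ - 2) ^ 2 * (v * w) by field_simp,
      show u * v * w * (1 / v) = u * w by field_simp,
      show u * v * w * ((φ - 1) ^ 2 / w) = (φ - 1) ^ 2 * (u * v) by field_simp]
  have hV3' : V3 = bary A B C ((φ - 2) ^ 2 * (v * w)) ((2 * φ - 3) ^ 2 * (u * w))
      ((φ - 1) ^ 2 * (u * v)) := by
    rw [hV3, bary_smul A B C (u * v * w) _ _ _ hk,
      show u * v * w * ((φ - 2) ^ 2 / u) = (φ - 2) ^ 2 * (v * w) by field_simp,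
      show u * v * w * ((2 * φ - 3) ^ 2 / v) = (2 * φ - 3) ^ 2 * (u * w) by field_simp,
      show u * v * w * ((φ - 1) ^ 2 / w) = (φ - 1) ^ 2 * (u * v) by field_simp]
  have hW1' : W1 = bary A B C (v * w) (φ ^ 2 * (u * w)) ((φ + 1) ^ 2 * (u * v)) := by
    rw [hW1, bary_smul A B C (u * v * w) _ _ _ hk,
      show u * v * w * (1 / u) = v * w by field_simp,
      show u * v * w * (φ ^ 2 / v) = φ ^ 2 * (u * w) by field_simp,
      show u * v * w * ((φ + 1) ^ 2 / w) = (φ + 1) ^ 2 * (u * v) by field_simp]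
  have hW2' : W2 = bary A B C ((2 * φ + 1) ^ 2 * (v * w)) (φ ^ 2 * (u * w))
      ((φ + 1) ^ 2 * (u * v)) := by
    rw [hW2, bary_smul A B C (u * v * w) _ _ _ hk,
      show u * v * w * ((2 * φ + 1) ^ 2 / u) = (2 * φ + 1) ^ 2 * (v * w) by field_simp,
      show u * v * w * (φ ^ 2 / v) = φ ^ 2 * (u * w) by field_simp,
      show u * v * w * ((φ + 1) ^ 2 / w) = (φ + 1) ^ 2 * (u * v) by field_simp]
  have hW3' : W3 = bary A B C ((2 * φ + 1) ^ 2 * (v * w)) ((3 * φ + 2) ^ 2 * (u * w))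
      ((φ + 1) ^ 2 * (u * v)) := by
    rw [hW3, bary_smul A B C (u * v * w) _ _ _ hk,
      show u * v * w * ((2 * φ + 1) ^ 2 / u) = (2 * φ + 1) ^ 2 * (v * w) by field_simp,
      show u * v * w * ((3 * φ + 2) ^ 2 / v) = (3 * φ + 2) ^ 2 * (u * w) by field_simp,
      show u * v * w * ((φ + 1) ^ 2 / w) = (φ + 1) ^ 2 * (u * v) by field_simp]
  -- σ positivity
  have hσ1 : 0 < φ ^ 2 * (v * w) + u * w + (φ - 1) ^ 2 * (u * v) :=
    add_pos (add_pos (mul_pos k1 (mul_pos hv0 hw0)) (mul_pos hu0 hw0))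
      (mul_pos k2 (mul_pos hu0 hv0))
  have hσ2 : 0 < (φ - 2) ^ 2 * (v * w) + u * w + (φ - 1) ^ 2 * (u * v) :=
    add_pos (add_pos (mul_pos k3 (mul_pos hv0 hw0)) (mul_pos hu0 hw0))
      (mul_pos k2 (mul_pos hu0 hv0))
  have hσ3 : 0 < (φ - 2) ^ 2 * (v * w) + (2 * φ - 3) ^ 2 * (u * w) + (φ - 1) ^ 2 * (u * v) :=
    add_pos (add_pos (mul_pos k3 (mul_pos hv0 hw0)) (mul_pos k4 (mul_pos hu0 hw0)))
      (mul_pos k2 (mul_pos hu0 hv0))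
  have hσ4 : 0 < v * w + φ ^ 2 * (u * w) + (φ + 1) ^ 2 * (u * v) :=
    add_pos (add_pos (mul_pos hv0 hw0) (mul_pos k1 (mul_pos hu0 hw0)))
      (mul_pos k5 (mul_pos hu0 hv0))
  have hσ5 : 0 < (2 * φ + 1) ^ 2 * (v * w) + φ ^ 2 * (u * w) + (φ + 1) ^ 2 * (u * v) :=
    add_pos (add_pos (mul_pos k6 (mul_pos hv0 hw0)) (mul_pos k1 (mul_pos hu0 hw0)))
      (mul_pos k5 (mul_pos hu0 hv0))
  have hσ6 : 0 < (2 * φ + 1) ^ 2 * (v * w) + (3 * φ + 2) ^ 2 * (u * w)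
      + (φ + 1) ^ 2 * (u * v) :=
    add_pos (add_pos (mul_pos k6 (mul_pos hv0 hw0)) (mul_pos k7 (mul_pos hu0 hw0)))
      (mul_pos k5 (mul_pos hu0 hv0))
  have hτ0 : a + b + c ≠ 0 := by positivity
  -- side lengths in terms of u, v, w
  have hav : a = v + w := by rw [hv, hw, hs]; ring
  have hbv : b = u + w := by rw [hu, hw, hs]; ring
  have hcv : c = u + v := by rw [hu, hv, hs]; ring
  -- squared distances to the six vertices
  have d1 := bary_dist_sq A B C a b c (φ ^ 2 * (v * w)) (u * w) ((φ - 1) ^ 2 * (u * v))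
    hτ0 (ne_of_gt hσ1)
  rw [← hI, ← hV1', ← ha, ← hb, ← hc, hav, hbv, hcv] at d1
  have d2 := bary_dist_sq A B C a b c ((φ - 2) ^ 2 * (v * w)) (u * w) ((φ - 1) ^ 2 * (u * v))
    hτ0 (ne_of_gt hσ2)
  rw [← hI, ← hV2', ← ha, ← hb, ← hc, hav, hbv, hcv] at d2
  have d3 := bary_dist_sq A B C a b c ((φ - 2) ^ 2 * (v * w)) ((2 * φ - 3) ^ 2 * (u * w))
    ((φ - 1) ^ 2 * (u * v)) hτ0 (ne_of_gt hσ3)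
  rw [← hI, ← hV3', ← ha, ← hb, ← hc, hav, hbv, hcv] at d3
  have d4 := bary_dist_sq A B C a b c (v * w) (φ ^ 2 * (u * w)) ((φ + 1) ^ 2 * (u * v))
    hτ0 (ne_of_gt hσ4)
  rw [← hI, ← hW1', ← ha, ← hb, ← hc, hav, hbv, hcv] at d4
  have d5 := bary_dist_sq A B C a b c ((2 * φ + 1) ^ 2 * (v * w)) (φ ^ 2 * (u * w))
    ((φ + 1) ^ 2 * (u * v)) hτ0 (ne_of_gt hσ5)
  rw [← hI, ← hW2', ← ha, ← hb, ← hc, hav, hbv, hcv] at d5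
  have d6 := bary_dist_sq A B C a b c ((2 * φ + 1) ^ 2 * (v * w)) ((3 * φ + 2) ^ 2 * (u * w))
    ((φ + 1) ^ 2 * (u * v)) hτ0 (ne_of_gt hσ6)
  rw [← hI, ← hW3', ← ha, ← hb, ← hc, hav, hbv, hcv] at d6
  have hτ' : (0 : ℝ) < v + w + (u + w) + (u + v) := by linarith
  have den : ∀ σ : ℝ, 0 < σ → ((v + w + (u + w) + (u + v)) * σ) ^ 2 ≠ 0 := fun σ hσ =>
    pow_ne_zero _ (mul_ne_zero (ne_of_gt hτ') (ne_of_gt hσ))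
  have hs0 : (0 : ℝ) < u + v + w := by linarith
  have f1 : dist I V1 ^ 2 = u * v * w / (u + v + w) := by
    rw [d1, div_eq_div_iff (den _ hσ1) (ne_of_gt hs0)]; ring
  have f2 : dist I V2 ^ 2 = u * v * w / (u + v + w) := by
    rw [d2, div_eq_div_iff (den _ hσ2) (ne_of_gt hs0)]; ring
  have f3 : dist I V3 ^ 2 = u * v * w / (u + v + w) := by
    rw [d3, div_eq_div_iff (den _ hσ3) (ne_of_gt hs0)]; ring
  have f4 : dist I W1 ^ 2 = u * v * w / (u + v + w) := by
    rw [d4, div_eq_div_iff (den _ hσ4) (ne_of_gt hs0)]; ring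
  have f5 : dist I W2 ^ 2 = u * v * w / (u + v + w) := by
    rw [d5, div_eq_div_iff (den _ hσ5) (ne_of_gt hs0)]; ring
  have f6 : dist I W3 ^ 2 = u * v * w / (u + v + w) := by
    rw [d6, div_eq_div_iff (den _ hσ6) (ne_of_gt hs0)]; ring
  have e12 : dist I V1 ^ 2 = dist I V2 ^ 2 := f1.trans f2.symm
  have e23 : dist I V2 ^ 2 = dist I V3 ^ 2 := f2.trans f3.symm
  have e34 : dist I V3 ^ 2 = dist I W1 ^ 2 := f3.trans f4.symm
  have e45 : dist I W1 ^ 2 = dist I W2 ^ 2 := f4.trans f5.symm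
  have e56 : dist I W2 ^ 2 = dist I W3 ^ 2 := f5.trans f6.symm
  have q12 : dist I V1 = dist I V2 := dist_eq_of_sq_eq e12
  have q23 : dist I V2 = dist I V3 := dist_eq_of_sq_eq e23
  have q34 : dist I V3 = dist I W1 := dist_eq_of_sq_eq e34
  have q45 : dist I W1 = dist I W2 := dist_eq_of_sq_eq e45
  have q56 : dist I W2 = dist I W3 := dist_eq_of_sq_eq e56
  refine ⟨⟨q12, q23, q34, q45, q56⟩, ?_, ?_⟩
  · intro hV
    have hspan : affineSpan ℝ (Set.range ![V1, V2, V3]) = ⊤ :=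
      hV.affineSpan_eq_top_iff_card_eq_finrank_add_one.mpr (by simp [finrank_euclideanSpace])
    refine (Affine.Simplex.eq_circumcenter_of_dist_eq _ ?_ (r := dist I V1) ?_).symm
    · show I ∈ affineSpan ℝ (Set.range ![V1, V2, V3])
      rw [hspan]
      exact AffineSubspace.mem_top ℝ _ I
    · intro i
      fin_cases i
      · show dist V1 I = dist I V1; rw [dist_comm]
      · show dist V2 I = dist I V1; rw [dist_comm]; exact q12.symm
      · show dist V3 I = dist I V1; rw [dist_comm]; exact (q12.trans q23).symm
  · intro hW
    have hspan : affineSpan ℝ (Set.range ![W1, W2, W3]) = ⊤ :=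
      hW.affineSpan_eq_top_iff_card_eq_finrank_add_one.mpr (by simp [finrank_euclideanSpace])
    refine (Affine.Simplex.eq_circumcenter_of_dist_eq _ ?_ (r := dist I W1) ?_).symm
    · show I ∈ affineSpan ℝ (Set.range ![W1, W2, W3])
      rw [hspan]
      exact AffineSubspace.mem_top ℝ _ I
    · intro i
      fin_cases i
      · show dist W1 I = dist I W1; rw [dist_comm]
      · show dist W2 I = dist I W1; rw [dist_comm]; exact q45.symm
      · show dist W3 I = dist I W1; rw [dist_comm]; exact (q45.trans q56).symm
end
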